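/- Let X be a real random variable with mean μ, variance at most σ², and |X - μ| ≤ b almost surely. If x_1,…,x_N are i.i.d. copies of X, then for every t > 0, P(N^{-1}∑_{n=1}^N x_n - μ ≥ t) ≤ exp(- N t² / (2(σ² + b t / 3))). -/

import Mathlib

open MeasureTheory ProbabilityTheory Real Filter

lemma lemA (x : ℝ) : exp x * (1 - x) ≤ 1 := by
  have h := add_one_le_exp (-x)
  have hp := exp_pos x
  calc exp x * (1 - x) ≤ exp x * exp (-x) := by
        apply mul_le_mul_of_nonneg_left (by linarith) hp.le
    _ = 1 := by rw [← exp_add]; simp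

lemma lemB (x : ℝ) : exp x * (1 - x/3) ≤ 1 + 2*x/3 + x^2/6 := by
  set f₁ : ℝ → ℝ := fun x => 2/3 + x/3 - exp x * (2/3 - x/3) with hf₁
  have hder₁ : ∀ x, HasDerivAt f₁ (1/3 - exp x * (1/3 - x/3)) x := by
    intro x
    have h1 := (Real.hasDerivAt_exp x).mul ((hasDerivAt_const x (2/3:ℝ)).sub ((hasDerivAt_id x).div_const 3))
    have h2 := (hasDerivAt_const x (2/3:ℝ)).add ((hasDerivAt_id x).div_const 3)
    have := (h2.sub h1)
    convert this using 1
    all_goals try rfl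
    simp only [Pi.sub_apply, id_eq]; ring
  have hf₁mono : Monotone f₁ := by
    apply monotone_of_hasDerivAt_nonneg hder₁
    intro x
    have := lemA x
    simp only [Pi.zero_apply]
    nlinarith
  have hf₁zero : f₁ 0 = 0 := by simp [hf₁]
  set H : ℝ → ℝ := fun x => 1 + 2*x/3 + x^2/6 - exp x * (1 - x/3) with hH
  have hderH : ∀ x, HasDerivAt H (f₁ x) x := by
    intro x
    have h1 := (Real.hasDerivAt_exp x).mul ((hasDerivAt_const x (1:ℝ)).sub ((hasDerivAt_id x).div_const 3))
    have h2 := ((hasDerivAt_const x (1:ℝ)).add (((hasDerivAt_id x).const_mul (2:ℝ)).div_const 3)).add ((hasDerivAt_pow 2 x).div_const 6)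
    have := h2.sub h1
    convert this using 1
    all_goals try rfl
    simp only [hf₁, Pi.sub_apply, Pi.add_apply, id_eq]; ring
  have hH0 : H 0 = 0 := by simp [hH]
  have key : 0 ≤ H x := by
    rcases le_total x 0 with hx | hx
    · have hanti : AntitoneOn H (Set.Iic 0) := by
        apply antitoneOn_of_deriv_nonpos (convex_Iic 0)
        · exact (fun y _ => (hderH y).differentiableAt.continuousAt.continuousWithinAt)
        · exact fun y _ => (hderH y).differentiableAt.differentiableWithinAt
        · intro y hy
          rw [(hderH y).deriv]
          have : f₁ y ≤ f₁ 0 := hf₁mono (le_of_lt (by simpa using hy))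
          linarith [hf₁zero ▸ this]
      have := hanti (Set.mem_Iic.2 hx) (Set.mem_Iic.2 le_rfl) hx
      linarith [hH0 ▸ this]
    · have hmono : MonotoneOn H (Set.Ici 0) := by
        apply monotoneOn_of_deriv_nonneg (convex_Ici 0)
        · exact (fun y _ => (hderH y).differentiableAt.continuousAt.continuousWithinAt)
        · exact fun y _ => (hderH y).differentiableAt.differentiableWithinAt
        · intro y hy
          rw [(hderH y).deriv]
          have : f₁ 0 ≤ f₁ y := hf₁mono (le_of_lt (by simpa using hy))
          linarith [hf₁zero ▸ this]
      have := hmono (Set.mem_Ici.2 le_rfl) (Set.mem_Ici.2 hx) hx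
      linarith [hH0 ▸ this]
  simp only [hH] at key
  linarith


lemma lemC {x c : ℝ} (hc : c < 3) (hxc : x ≤ c) :
    exp x ≤ 1 + x + x^2 / (2*(1 - c/3)) := by
  have hd : 0 < 2*(1 - c/3) := by linarith
  have h1 : exp x - 1 - x ≤ x^2 / (2*(1 - c/3)) := by
    rw [le_div_iff₀ hd]
    have hB := lemB x
    have hA := add_one_le_exp x
    nlinarith [sq_nonneg x]
  linarith

lemma lemD {Ω : Type*} [MeasurableSpace Ω] (P : Measure Ω) [IsProbabilityMeasure P]
    (Y : Ω → ℝ) (hY : Measurable Y) (b σ2 s : ℝ) (hs : 0 ≤ s) (hsb : s*b < 3)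
    (hmean : ∫ ω, Y ω ∂P = 0) (hvar : ∫ ω, (Y ω)^2 ∂P ≤ σ2)
    (hbd : ∀ᵐ ω ∂P, |Y ω| ≤ b) :
    mgf Y P s ≤ exp (s^2/(2*(1 - s*b/3)) * σ2) := by
  have hd : 0 < 2*(1 - s*b/3) := by linarith
  set k : ℝ := s^2/(2*(1 - s*b/3)) with hk
  have hknn : 0 ≤ k := by positivity
  have hIntY : Integrable Y P := by
    apply Integrable.mono' (integrable_const b) hY.aestronglyMeasurable
    filter_upwards [hbd] with ω h using by simpa using h
  have hIntY2 : Integrable (fun ω => (Y ω)^2) P := by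
    apply Integrable.mono' (integrable_const (b^2)) (hY.pow_const 2).aestronglyMeasurable
    filter_upwards [hbd] with ω h
    have := abs_nonneg (Y ω)
    simp only [norm_eq_abs, abs_pow, sq_abs]
    nlinarith [abs_le.mp h]
  have hIntExp : Integrable (fun ω => exp (s * Y ω)) P := by
    apply Integrable.mono' (integrable_const (exp (s*b))) ((hY.const_mul s).exp).aestronglyMeasurable
    filter_upwards [hbd] with ω h
    rw [norm_eq_abs, abs_of_pos (exp_pos _), exp_le_exp]
    have := (abs_le.mp h).2
    nlinarith
  have hIntRHS : Integrable (fun ω => 1 + s * Y ω + k * (Y ω)^2) P :=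
    ((integrable_const 1).add (hIntY.const_mul s)).add (hIntY2.const_mul k)
  have hmono : mgf Y P s ≤ ∫ ω, (1 + s * Y ω + k * (Y ω)^2) ∂P := by
    apply integral_mono_ae hIntExp hIntRHS
    filter_upwards [hbd] with ω h
    have hx : s * Y ω ≤ s * b := mul_le_mul_of_nonneg_left (abs_le.mp h).2 hs
    have := lemC hsb hx
    calc exp (s * Y ω) ≤ 1 + s * Y ω + (s * Y ω)^2 / (2*(1 - s*b/3)) := this
      _ = 1 + s * Y ω + k * (Y ω)^2 := by rw [hk]; ring
  have hcalc : ∫ ω, (1 + s * Y ω + k * (Y ω)^2) ∂P = 1 + k * ∫ ω, (Y ω)^2 ∂P := by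
    have e1 : ∫ ω, (1 + s * Y ω + k * (Y ω)^2) ∂P
        = (∫ ω, (1 + s * Y ω) ∂P) + ∫ ω, k * (Y ω)^2 ∂P :=
      integral_add ((integrable_const 1).add (hIntY.const_mul s)) (hIntY2.const_mul k)
    have e2 : ∫ ω, (1 + s * Y ω) ∂P = (∫ _ω, (1:ℝ) ∂P) + ∫ ω, s * Y ω ∂P :=
      integral_add (integrable_const 1) (hIntY.const_mul s)
    rw [e1, e2, integral_const, integral_const_mul, integral_const_mul, hmean]
    simp
  have h2 : mgf Y P s ≤ 1 + k * σ2 := by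
    rw [hcalc] at hmono
    have := mul_le_mul_of_nonneg_left hvar hknn
    linarith
  calc mgf Y P s ≤ 1 + k * σ2 := h2
    _ ≤ exp (k * σ2) := by linarith [add_one_le_exp (k * σ2)]

lemma lemE
    {Ω : Type*} [MeasurableSpace Ω] (P : Measure Ω) [IsProbabilityMeasure P]
    (N : ℕ) (hN : 0 < N) (X : Fin N → Ω → ℝ)
    (hmeas : ∀ n, Measurable (X n))
    (hindep : iIndepFun X P)
    (μ σ2 b : ℝ) (hσ2 : 0 < σ2) (hb : 0 < b)
    (hmean : ∀ n, ∫ ω, X n ω ∂P = μ)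
    (hvar : ∀ n, variance (X n) P ≤ σ2)
    (hbound : ∀ n, ∀ᵐ ω ∂P, |X n ω - μ| ≤ b)
    (t : ℝ) (ht : 0 < t) :
      (P {ω | t ≤ (N : ℝ)⁻¹ * ∑ n, X n ω - μ}).toReal
        ≤ Real.exp (-((N : ℝ) * t ^ 2) / (2 * (σ2 + b * t / 3))) := by
  have hNpos : (0:ℝ) < N := by exact_mod_cast hN
  have hden : 0 < σ2 + b * t / 3 := by positivity
  set s : ℝ := t / (σ2 + b * t / 3) with hs_def
  have hs : 0 < s := div_pos ht hden
  have hsb : s * b < 3 := by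
    rw [hs_def, div_mul_eq_mul_div, div_lt_iff₀ hden]
    nlinarith
  set Y : Fin N → Ω → ℝ := fun n ω => X n ω - μ with hY_def
  have hYmeas : ∀ n, Measurable (Y n) := fun n => (hmeas n).sub measurable_const
  have hYindep : iIndepFun Y P :=
    hindep.comp (fun _ x => x - μ) (fun _ => measurable_id.sub measurable_const)
  have hXint : ∀ n, Integrable (X n) P := by
    intro n
    apply Integrable.mono' (integrable_const (b + |μ|)) (hmeas n).aestronglyMeasurable
    filter_upwards [hbound n] with ω h
    rw [norm_eq_abs]
    have := abs_sub_abs_le_abs_sub (X n ω) μ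
    linarith
  have hYmean : ∀ n, ∫ ω, Y n ω ∂P = 0 := by
    intro n
    rw [hY_def]
    rw [integral_sub (hXint n) (integrable_const μ), hmean n, integral_const]
    simp
  have hℒp : ∀ n, MemLp (X n) 2 P := by
    intro n
    apply MemLp.of_bound (hmeas n).aestronglyMeasurable (b + |μ|)
    filter_upwards [hbound n] with ω h
    rw [norm_eq_abs]
    have := abs_sub_abs_le_abs_sub (X n ω) μ
    linarith
  have hYsq : ∀ n, ∫ ω, (Y n ω)^2 ∂P ≤ σ2 := by
    intro n
    have hv := variance_eq_integral (hℒp n).aemeasurable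
    rw [hmean n] at hv
    have heq : ∫ ω, (Y n ω)^2 ∂P = variance (X n) P := by
      rw [hv]
    rw [heq]
    exact hvar n
  have hint : ∀ n, Integrable (fun ω => exp (s * Y n ω)) P := by
    intro n
    apply Integrable.mono' (integrable_const (exp (s*b))) ((hYmeas n).const_mul s).exp.aestronglyMeasurable
    filter_upwards [hbound n] with ω h
    rw [norm_eq_abs, abs_of_pos (exp_pos _), exp_le_exp]
    exact mul_le_mul_of_nonneg_left (abs_le.mp h).2 hs.le
  have hset : {ω | t ≤ (N : ℝ)⁻¹ * ∑ n, X n ω - μ} = {ω | (N:ℝ)*t ≤ (∑ n, Y n) ω} := by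
    ext ω
    simp only [Set.mem_setOf_eq, Finset.sum_apply]
    have hsum : ∑ n, Y n ω = (∑ n, X n ω) - N * μ := by
      rw [hY_def]
      rw [Finset.sum_sub_distrib, Finset.sum_const, Finset.card_univ, Fintype.card_fin]
      simp [nsmul_eq_mul]
    rw [hsum]
    constructor
    · intro h
      have := mul_le_mul_of_nonneg_left h hNpos.le
      calc (N:ℝ)*t ≤ N*((N:ℝ)⁻¹ * ∑ n, X n ω - μ) := this
        _ = (∑ n, X n ω) - N*μ := by field_simp
    · intro h
      have := mul_le_mul_of_nonneg_left h (inv_nonneg.mpr hNpos.le)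
      calc t = (N:ℝ)⁻¹ * ((N:ℝ)*t) := by field_simp
        _ ≤ (N:ℝ)⁻¹ * ((∑ n, X n ω) - N*μ) := this
        _ = (N:ℝ)⁻¹ * ∑ n, X n ω - μ := by field_simp
  rw [hset]
  have hch := measure_ge_le_exp_mul_mgf (μ := P) (X := ∑ n, Y n) ((N:ℝ)*t) hs.le
    (hYindep.integrable_exp_mul_sum hYmeas (fun i _ => hint i))
  rw [hYindep.mgf_sum hYmeas] at hch
  set E : ℝ := exp (s^2/(2*(1 - s*b/3)) * σ2) with hE
  have hprod : ∏ n, mgf (Y n) P s ≤ E ^ N := by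
    calc ∏ n, mgf (Y n) P s ≤ ∏ _n : Fin N, E := by
          apply Finset.prod_le_prod (fun _ _ => mgf_nonneg)
          intro n _
          exact lemD P (Y n) (hYmeas n) b σ2 s hs.le hsb (hYmean n) (hYsq n) (hbound n)
      _ = E ^ N := by rw [Finset.prod_const, Finset.card_univ, Fintype.card_fin]
  have hfinal : exp (-s * ((N:ℝ)*t)) * E ^ N = exp (-((N : ℝ) * t ^ 2) / (2 * (σ2 + b * t / 3))) := by
    rw [hE, ← exp_nat_mul, ← exp_add]
    congr 1
    have h1 : 1 - s*b/3 = σ2 / (σ2 + b*t/3) := by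
      rw [hs_def]; field_simp; ring
    rw [h1, hs_def]
    field_simp
    ring
  calc (P {ω | (N:ℝ)*t ≤ (∑ n, Y n) ω}).toReal
      ≤ exp (-s * ((N:ℝ)*t)) * ∏ n, mgf (Y n) P s := hch
    _ ≤ exp (-s * ((N:ℝ)*t)) * E ^ N := by
        apply mul_le_mul_of_nonneg_left hprod (exp_pos _).le
    _ = _ := hfinal


/-- Bernstein's inequality for i.i.d. bounded real random variables: if `X` has
mean `μ`, variance at most `σ²`, and `|X - μ| ≤ b` almost surely, then for i.i.d.
copies `x₁,…,x_N` and every `t > 0`,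
`P(N⁻¹ ∑ xₙ - μ ≥ t) ≤ exp(-N t² / (2(σ² + b t / 3)))`. -/
theorem bernstein_inequality
    {Ω : Type*} [MeasurableSpace Ω] (P : Measure Ω) [IsProbabilityMeasure P]
    (N : ℕ) (hN : 0 < N) (X : Fin N → Ω → ℝ)
    (hmeas : ∀ n, Measurable (X n))
    (hindep : iIndepFun X P)
    (hident : ∀ n, P.map (X n) = P.map (X ⟨0, hN⟩))
    (μ σ2 b : ℝ) (hσ2 : 0 ≤ σ2) (hb : 0 < b)
    (hmean : ∀ n, ∫ ω, X n ω ∂P = μ)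
    (hvar : ∀ n, variance (X n) P ≤ σ2)
    (hbound : ∀ n, ∀ᵐ ω ∂P, |X n ω - μ| ≤ b) :
    ∀ t > 0,
      (P {ω | t ≤ (N : ℝ)⁻¹ * ∑ n, X n ω - μ}).toReal
        ≤ Real.exp (-((N : ℝ) * t ^ 2) / (2 * (σ2 + b * t / 3))) := by
  intro t ht
  have key : ∀ ε : ℝ, 0 < ε →
      (P {ω | t ≤ (N : ℝ)⁻¹ * ∑ n, X n ω - μ}).toReal
        ≤ Real.exp (-((N : ℝ) * t ^ 2) / (2 * (σ2 + ε + b * t / 3))) := by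
    intro ε hε
    exact lemE P N hN X hmeas hindep μ (σ2 + ε) b (by linarith) hb hmean
      (fun n => le_trans (hvar n) (by linarith)) hbound t ht
  have hden : 0 < σ2 + b * t / 3 := by positivity
  have h0 : Tendsto (fun k : ℕ => σ2 + 1/((k:ℝ)+1) + b*t/3) atTop
      (nhds (σ2 + 0 + b*t/3)) :=
    (tendsto_const_nhds.add tendsto_one_div_add_atTop_nhds_zero_nat).add tendsto_const_nhds
  have hne : (2:ℝ) * (σ2 + 0 + b*t/3) ≠ 0 := by rw [add_zero]; positivity
  have hdiv : Tendsto (fun k : ℕ => -((N : ℝ) * t ^ 2) / (2 * (σ2 + 1/((k:ℝ)+1) + b*t/3)))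
      atTop (nhds (-((N : ℝ) * t ^ 2) / (2 * (σ2 + 0 + b*t/3)))) :=
    Filter.Tendsto.div tendsto_const_nhds (tendsto_const_nhds.mul h0) hne
  have htend : Tendsto (fun k : ℕ => Real.exp (-((N : ℝ) * t ^ 2) / (2 * (σ2 + 1/((k:ℝ)+1) + b*t/3))))
      atTop (nhds (Real.exp (-((N : ℝ) * t ^ 2) / (2 * (σ2 + b * t / 3))))) := by
    have := (Real.continuous_exp.continuousAt.tendsto).comp hdiv
    simpa [Function.comp_def] using this
  exact ge_of_tendsto' htend (fun k => key (1/((k:ℝ)+1)) (by positivity))
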